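/- Let n ≥ 2 and 1 ≤ p ≤ n. Then F(1,…,1) = p, and for every λ ∈ 𝒫_p one has ∑_{i=1}^n F_i(λ) ≥ F(1,…,1) = p. -/

import Mathlib

open Finset

/-- The cone `𝒫_p ⊆ ℝ^n`: every sum of `p` pairwise distinct components is positive. -/
def Pcone (n p : ℕ) : Set (Fin n → ℝ) :=
  {lam | ∀ S : Finset (Fin n), S.card = p → 0 < ∑ i ∈ S, lam i}

/-- `M_p^n(λ) = ∏_{|S| = p} ∑_{i ∈ S} λ_i`. -/
def Mpn (n p : ℕ) (lam : Fin n → ℝ) : ℝ :=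
  ∏ S ∈ Finset.univ.powersetCard p, ∑ i ∈ S, lam i

/-- `F(λ) = (M_p^n(λ))^{1/C(n,p)}`. -/
noncomputable def Fpn (n p : ℕ) (lam : Fin n → ℝ) : ℝ :=
  Mpn n p lam ^ ((n.choose p : ℝ)⁻¹)

/-- `F_i(λ) = ∂F/∂λ_i (λ)`. -/
noncomputable def Fi (n p : ℕ) (lam : Fin n → ℝ) (i : Fin n) : ℝ :=
  fderiv ℝ (Fpn n p) lam (Pi.single i 1)

/-- `F(1,…,1) = p`, and for every `λ ∈ 𝒫_p` the sum of the partial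
derivatives of `F` at `λ` is at least `F(1,…,1) = p`. -/
theorem sum_Fi_ge_p (n p : ℕ) (hn : 2 ≤ n) (hp1 : 1 ≤ p) (hpn : p ≤ n) :
    Fpn n p (fun _ : Fin n => (1 : ℝ)) = p ∧
    ∀ lam ∈ Pcone n p, (p : ℝ) ≤ ∑ i, Fi n p lam i := by
  classical
  set u : Finset (Finset (Fin n)) := Finset.univ.powersetCard p with hu
  have hmem : ∀ S ∈ u, S.card = p := fun S hS => (Finset.mem_powersetCard.mp hS).2
  have hCpos : 0 < n.choose p := Nat.choose_pos hpn
  have hcard : u.card = n.choose p := by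
    simp [hu, Finset.card_powersetCard]
  set c : ℝ := ((n.choose p : ℝ))⁻¹ with hc
  have hcpos : 0 < c := by positivity
  constructor
  · have hM : Mpn n p (fun _ : Fin n => (1 : ℝ)) = (p : ℝ) ^ (n.choose p : ℕ) := by
      unfold Mpn
      rw [Finset.prod_congr rfl (fun S hS => ?_), Finset.prod_const, hcard]
      simp [hmem S hS]
    unfold Fpn
    rw [hM, ← Real.rpow_natCast (p : ℝ) (n.choose p), ← Real.rpow_mul (by positivity)]
    rw [mul_inv_cancel₀ (by exact_mod_cast hCpos.ne'), Real.rpow_one]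
  · intro lam hlam
    have hσ : ∀ S ∈ u, 0 < ∑ i ∈ S, lam i := fun S hS => hlam S (hmem S hS)
    set M : ℝ := Mpn n p lam with hMdef
    have hMpos : 0 < M := Finset.prod_pos hσ
    -- derivative of each linear factor
    have hlin : ∀ S ∈ u, HasFDerivAt (fun l : Fin n → ℝ => ∑ i ∈ S, l i)
        (∑ i ∈ S, ContinuousLinearMap.proj (R := ℝ) (φ := fun _ : Fin n => ℝ) i) lam :=
      fun S _ => HasFDerivAt.fun_sum (fun i _ => hasFDerivAt_apply i lam)
    set M' : (Fin n → ℝ) →L[ℝ] ℝ :=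
      ∑ S ∈ u, (∏ T ∈ u.erase S, ∑ i ∈ T, lam i) •
        (∑ i ∈ S, ContinuousLinearMap.proj (R := ℝ) (φ := fun _ : Fin n => ℝ) i) with hM'
    have hMderiv : HasFDerivAt (Mpn n p) M' lam := HasFDerivAt.finset_prod hlin
    have hFderiv : HasFDerivAt (Fpn n p) ((c * M ^ (c - 1)) • M') lam :=
      hMderiv.rpow_const (Or.inl hMpos.ne')
    have hfd : fderiv ℝ (Fpn n p) lam = (c * M ^ (c - 1)) • M' := hFderiv.fderiv
    have hsum : ∑ i, Fi n p lam i = ((c * M ^ (c - 1)) • M') (fun _ => (1 : ℝ)) := by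
      unfold Fi
      rw [hfd, ← map_sum]
      congr 1
      funext j
      simp [Finset.sum_pi_single]
    -- compute the applied derivative
    have happ : ((c * M ^ (c - 1)) • M') (fun _ => (1 : ℝ))
        = c * M ^ (c - 1) * ∑ S ∈ u, (∏ T ∈ u.erase S, ∑ i ∈ T, lam i) * p := by
      rw [hM']
      simp only [ContinuousLinearMap.smul_apply, ContinuousLinearMap.sum_apply,
        ContinuousLinearMap.coe_smul', Pi.smul_apply, smul_eq_mul,
        ContinuousLinearMap.proj_apply]
      congr 1
      refine Finset.sum_congr rfl fun S hS => ?_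
      rw [Finset.sum_const, hmem S hS, nsmul_eq_mul, mul_one]
    have herase : ∀ S ∈ u, (∏ T ∈ u.erase S, ∑ i ∈ T, lam i) = M * (∑ i ∈ S, lam i)⁻¹ := by
      intro S hS
      have h : (∑ i ∈ S, lam i) * ∏ T ∈ u.erase S, ∑ i ∈ T, lam i = M :=
        Finset.mul_prod_erase u (fun T => ∑ i ∈ T, lam i) hS
      rw [← h, mul_comm (∑ i ∈ S, lam i), mul_assoc,
        mul_inv_cancel₀ (hσ S hS).ne', mul_one]
    rw [hsum, happ, Finset.sum_congr rfl (fun S hS => by rw [herase S hS])]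
    -- AM-GM
    have hamgm : (M ^ c)⁻¹ ≤ ∑ S ∈ u, c * (∑ i ∈ S, lam i)⁻¹ := by
      have h := Real.geom_mean_le_arith_mean_weighted u (fun _ => c)
        (fun S => (∑ i ∈ S, lam i)⁻¹) (fun _ _ => hcpos.le)
        (by rw [Finset.sum_const, hcard, nsmul_eq_mul, mul_inv_cancel₀
          (by exact_mod_cast hCpos.ne')])
        (fun S hS => inv_nonneg.2 (hσ S hS).le)
      calc (M ^ c)⁻¹ = ∏ S ∈ u, ((∑ i ∈ S, lam i)⁻¹) ^ c := by
            rw [Real.finset_prod_rpow u _ (fun S hS => inv_nonneg.2 (hσ S hS).le),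
              ← Real.inv_rpow hMpos.le, Finset.prod_inv_distrib]
            rfl
        _ ≤ _ := h
    have hMc : (0:ℝ) < M ^ c := Real.rpow_pos_of_pos hMpos _
    have key : c * M ^ (c - 1) * ∑ S ∈ u, M * (∑ i ∈ S, lam i)⁻¹ * p
        = (p : ℝ) * (M ^ c * ∑ S ∈ u, c * (∑ i ∈ S, lam i)⁻¹) := by
      have hMc1 : M ^ (c - 1) * M = M ^ c := by
        rw [← Real.rpow_add_one hMpos.ne' (c - 1), sub_add_cancel]
      rw [Finset.mul_sum, Finset.mul_sum, Finset.mul_sum]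
      refine Finset.sum_congr rfl fun S hS => ?_
      rw [← hMc1]
      ring
    rw [key]
    calc (p : ℝ) = p * (M ^ c * (M ^ c)⁻¹) := by
          rw [mul_inv_cancel₀ hMc.ne', mul_one]
      _ ≤ p * (M ^ c * ∑ S ∈ u, c * (∑ i ∈ S, lam i)⁻¹) := by
          apply mul_le_mul_of_nonneg_left _ (by positivity)
          exact mul_le_mul_of_nonneg_left hamgm hMc.le
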